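/- Let r > 12 and α > 0. Then every root of the cubic polynomial (8 - r - λ)(-4 - λ)(-α - λ) - 12α has negative real part; consequently the matrix A_d = [[8 - r, -4, -8, 0], [0, -4, 0, 1], [0, 0, -4, 1], [α, 0, 0, -α]] is stable. -/

import Mathlib

open Matrix Polynomial in
lemma charpoly_eval_aux (M : Matrix (Fin 4) (Fin 4) ℂ) (μ : ℂ) :
    M.charpoly.eval μ = (Matrix.scalar (Fin 4) μ - M).det := by
  rw [Matrix.charpoly, _root_.eval_det, Matrix.matPolyEquiv_charmatrix]
  simp

open Matrix in
lemma det_fin_four_aux (M : Matrix (Fin 4) (Fin 4) ℂ) :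
    M.det =
      M 0 0 * M 1 1 * M 2 2 * M 3 3 - M 0 0 * M 1 1 * M 2 3 * M 3 2 -
        M 0 0 * M 1 2 * M 2 1 * M 3 3 + M 0 0 * M 1 2 * M 2 3 * M 3 1 +
        M 0 0 * M 1 3 * M 2 1 * M 3 2 - M 0 0 * M 1 3 * M 2 2 * M 3 1 -
        M 0 1 * M 1 0 * M 2 2 * M 3 3 + M 0 1 * M 1 0 * M 2 3 * M 3 2 +
        M 0 1 * M 1 2 * M 2 0 * M 3 3 - M 0 1 * M 1 2 * M 2 3 * M 3 0 -
        M 0 1 * M 1 3 * M 2 0 * M 3 2 + M 0 1 * M 1 3 * M 2 2 * M 3 0 +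
        M 0 2 * M 1 0 * M 2 1 * M 3 3 - M 0 2 * M 1 0 * M 2 3 * M 3 1 -
        M 0 2 * M 1 1 * M 2 0 * M 3 3 + M 0 2 * M 1 1 * M 2 3 * M 3 0 +
        M 0 2 * M 1 3 * M 2 0 * M 3 1 - M 0 2 * M 1 3 * M 2 1 * M 3 0 -
        M 0 3 * M 1 0 * M 2 1 * M 3 2 + M 0 3 * M 1 0 * M 2 2 * M 3 1 +
        M 0 3 * M 1 1 * M 2 0 * M 3 2 - M 0 3 * M 1 1 * M 2 2 * M 3 0 -
        M 0 3 * M 1 2 * M 2 0 * M 3 1 + M 0 3 * M 1 2 * M 2 1 * M 3 0 := by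
  rw [Matrix.det_succ_row_zero]
  simp [Fin.sum_univ_succ, Matrix.det_fin_three, Matrix.submatrix_apply, Fin.succAbove]
  ring

open Matrix in
theorem stmt_17 (r α : ℝ) (hr : r > 12) (hα : α > 0) :
    (∀ z : ℂ, ((8 : ℂ) - r - z) * (-4 - z) * (-(α : ℂ) - z) - 12*(α : ℂ) = 0 → z.re < 0) ∧
    (∀ μ : ℂ,
      ((!![8 - r, -4, -8, 0; 0, -4, 0, 1; 0, 0, -4, 1; α, 0, 0, -α] :
          Matrix (Fin 4) (Fin 4) ℝ).map (Complex.ofReal)).charpoly.IsRoot μ → μ.re < 0) := by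
  have h1 : ∀ z : ℂ, ((8 : ℂ) - r - z) * (-4 - z) * (-(α : ℂ) - z) - 12*(α : ℂ) = 0 → z.re < 0 := by
    intro z hz
    by_contra h
    push_neg at h
    have heq : ((8 : ℂ) - r - z) * (-4 - z) * (-(α : ℂ) - z) = 12 * α := by
      linear_combination hz
    have habs := congrArg (‖·‖) heq
    rw [norm_mul, norm_mul] at habs
    have hA : r - 8 ≤ ‖((8 : ℂ) - r - z)‖ := by
      have h2 := Complex.abs_re_le_norm ((8 : ℂ) - r - z)
      have hre : ((8 : ℂ) - r - z).re = 8 - r - z.re := by simp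
      rw [hre] at h2
      have := le_trans (neg_le_abs (8 - r - z.re)) h2
      linarith
    have hB : (4:ℝ) ≤ ‖((-4 : ℂ) - z)‖ := by
      have h2 := Complex.abs_re_le_norm ((-4 : ℂ) - z)
      have hre : ((-4 : ℂ) - z).re = -4 - z.re := by simp
      rw [hre] at h2
      have := le_trans (neg_le_abs (-4 - z.re)) h2
      linarith
    have hC : α ≤ ‖(-(α : ℂ) - z)‖ := by
      have h2 := Complex.abs_re_le_norm (-(α : ℂ) - z)
      have hre : (-(α : ℂ) - z).re = -α - z.re := by simp
      rw [hre] at h2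
      have := le_trans (neg_le_abs (-α - z.re)) h2
      linarith
    have h12 : ‖(12 * (α : ℂ))‖ = 12 * α := by
      rw [norm_mul, Complex.norm_real, Real.norm_eq_abs, abs_of_pos hα]
      simp
    rw [h12] at habs
    have hA4 : (4:ℝ) ≤ ‖((8 : ℂ) - r - z)‖ := by linarith
    have s1 : (4:ℝ) * 4 ≤ ‖((8 : ℂ) - r - z)‖ * ‖((-4 : ℂ) - z)‖ :=
      mul_le_mul hA4 hB (by norm_num) (le_trans (by norm_num) hA4)
    have s2 : (4:ℝ) * 4 * α ≤ ‖((8 : ℂ) - r - z)‖ * ‖((-4 : ℂ) - z)‖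
        * ‖(-(α : ℂ) - z)‖ :=
      mul_le_mul s1 hC hα.le (le_trans (by norm_num) s1)
    nlinarith
  refine ⟨h1, fun μ hroot => ?_⟩
  rw [Polynomial.IsRoot, charpoly_eval_aux] at hroot
  have hM : Matrix.scalar (Fin 4) μ -
      (!![8 - r, -4, -8, 0; 0, -4, 0, 1; 0, 0, -4, 1; α, 0, 0, -α] :
        Matrix (Fin 4) (Fin 4) ℝ).map (Complex.ofReal) =
      !![μ - (8 - (r:ℂ)), 4, 8, 0; 0, μ + 4, 0, -1; 0, 0, μ + 4, -1;
         -(α:ℂ), 0, 0, μ + α] := by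
    ext i j
    fin_cases i <;> fin_cases j <;>
      simp [Matrix.scalar_apply, Matrix.diagonal_apply, Matrix.vecHead, Matrix.vecTail] <;> ring
  rw [hM, det_fin_four_aux] at hroot
  simp only [Matrix.of_apply, Matrix.cons_val, Matrix.cons_val_zero, Matrix.cons_val_one] at hroot
  norm_num [Matrix.vecHead, Matrix.vecTail] at hroot
  have hfact : (μ + 4) * (((8 : ℂ) - r - μ) * (-4 - μ) * (-(α : ℂ) - μ) - 12*(α : ℂ)) = 0 := by
    linear_combination -hroot
  rcases mul_eq_zero.mp hfact with h | h
  · have hμ : μ = -4 := by linear_combination h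
    rw [hμ]
    norm_num
  · exact h1 μ h
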